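/- Let (X_n, f_{n,n+1}) be an inverse system indexed by ℕ, where each X_n is a nonempty compact Hausdorff topological space and each bonding map f_{n,n+1} : X_{n+1} → X_n is continuous and surjective. Let X_∞ be the inverse limit with canonical projections f_{n,∞} : X_∞ → X_n. Suppose U_n ⊆ X_n (n = 0, 1, 2, ...) are dense open subsets such that f_{n,n+1}(U_{n+1}) ⊆ U_n for all n. Then the intersection ⋂_{n=0}^{∞} f_{n,∞}⁻¹(U_n) is dense in X_∞. -/

import Mathlib

section Aux

variable {X : ℕ → Type*} [∀ n, Nonempty (X n)]

/-- Composite of the bonding maps, sending `X n` to `X m` (junk value if `m > n`). -/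
noncomputable def invSysDown (f : ∀ n, X (n + 1) → X n) : ∀ n, X n → ∀ m, X m
  | 0, x, m => if h : m = 0 then cast (congrArg X h).symm x else Classical.arbitrary _
  | n+1, x, m => if h : m = n+1 then cast (congrArg X h).symm x else invSysDown f n (f n x) m

theorem invSysDown_self (f : ∀ n, X (n + 1) → X n) (n : ℕ) (x : X n) :
    invSysDown f n x n = x := by
  cases n <;> simp [invSysDown]

theorem invSysDown_step (f : ∀ n, X (n + 1) → X n) (n : ℕ) (x : X (n + 1)) (m : ℕ)
    (h : m ≠ n + 1) : invSysDown f (n + 1) x m = invSysDown f n (f n x) m := by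
  simp [invSysDown, h]

theorem invSysDown_comp (f : ∀ n, X (n + 1) → X n) (m : ℕ) :
    ∀ (n : ℕ), m + 1 ≤ n → ∀ x : X n,
      f m (invSysDown f n x (m + 1)) = invSysDown f n x m := by
  intro n h
  induction n, h using Nat.le_induction with
  | base =>
    intro x
    rw [invSysDown_self, invSysDown_step f m x m (by omega), invSysDown_self]
  | succ n h ih =>
    intro x
    rw [invSysDown_step f n x (m+1) (by omega), invSysDown_step f n x m (by omega), ih (f n x)]

theorem invSysDown_thread (f : ∀ n, X (n + 1) → X n)
    (y : ∀ m, X m) (hy : ∀ m, f m (y (m + 1)) = y m) (m : ℕ) :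
    ∀ (n : ℕ), m ≤ n → invSysDown f n (y n) m = y m := by
  intro n h
  induction n, h using Nat.le_induction with
  | base => exact invSysDown_self f m (y m)
  | succ n h ih => rw [invSysDown_step f n (y (n+1)) m (by omega), hy n, ih]

theorem invSysDown_continuous [∀ n, TopologicalSpace (X n)]
    (f : ∀ n, X (n + 1) → X n) (hf : ∀ n, Continuous (f n)) :
    ∀ (n m : ℕ), Continuous (fun x : X n => invSysDown f n x m) := by
  intro n
  induction n with
  | zero =>
    intro m
    by_cases h : m = 0
    · subst h; simpa [invSysDown] using continuous_id'
    · simpa [invSysDown, h] using continuous_const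
  | succ n ih =>
    intro m
    by_cases h : m = n + 1
    · subst h; simpa [invSysDown] using continuous_id'
    · simp only [invSysDown, h, dif_neg, not_false_iff]
      exact (ih m).comp (hf n)

theorem invSysDown_mem (f : ∀ n, X (n + 1) → X n) (U : ∀ n, Set (X n))
    (hU : ∀ n, (f n) '' U (n + 1) ⊆ U n) (m : ℕ) :
    ∀ (n : ℕ), m ≤ n → ∀ x : X n, x ∈ U n → invSysDown f n x m ∈ U m := by
  intro n h
  induction n, h using Nat.le_induction with
  | base => intro x hx; rwa [invSysDown_self]
  | succ n h ih =>
    intro x hx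
    rw [invSysDown_step f n x m (by omega)]
    exact ih (f n x) (hU n ⟨x, hx, rfl⟩)

/-- Lift a point upward through the (surjective) bonding maps. -/
noncomputable def invSysUp (f : ∀ n, X (n + 1) → X n) (hf : ∀ n, Function.Surjective (f n))
    (k : ℕ) (x : X k) : ∀ j, X (k + j)
  | 0 => x
  | j+1 => Function.surjInv (hf (k + j)) (invSysUp f hf k x j)

theorem invSysUp_step (f : ∀ n, X (n + 1) → X n) (hf : ∀ n, Function.Surjective (f n))
    (k : ℕ) (x : X k) (j : ℕ) :
    f (k + j) (invSysUp f hf k x (j + 1)) = invSysUp f hf k x j :=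
  Function.surjInv_eq (hf (k + j)) _

/-- A thread of the inverse system passing through `x : X k`. -/
noncomputable def invSysThread (f : ∀ n, X (n + 1) → X n) (hf : ∀ n, Function.Surjective (f n))
    (k : ℕ) (x : X k) : ∀ m, X m :=
  fun m => invSysDown f (k + m) (invSysUp f hf k x m) m

theorem invSysThread_compat (f : ∀ n, X (n + 1) → X n) (hf : ∀ n, Function.Surjective (f n))
    (k : ℕ) (x : X k) (m : ℕ) :
    f m (invSysThread f hf k x (m + 1)) = invSysThread f hf k x m := by
  show f m (invSysDown f (k + m + 1) (invSysUp f hf k x (m + 1)) (m + 1))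
      = invSysDown f (k + m) (invSysUp f hf k x m) m
  rw [invSysDown_comp f m (k + m + 1) (by omega),
    invSysDown_step f (k + m) _ m (by omega), invSysUp_step f hf k x m]

theorem invSysThread_self (f : ∀ n, X (n + 1) → X n) (hf : ∀ n, Function.Surjective (f n))
    (k : ℕ) (x : X k) : invSysThread f hf k x k = x := by
  show invSysDown f (k + k) (invSysUp f hf k x k) k = x
  have : ∀ j, invSysDown f (k + j) (invSysUp f hf k x j) k = x := by
    intro j
    induction j with
    | zero => exact invSysDown_self f k x
    | succ j ih =>
      show invSysDown f ((k + j) + 1) (invSysUp f hf k x (j + 1)) k = x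
      rw [invSysDown_step f (k + j) _ k (by omega), invSysUp_step f hf k x j, ih]
  exact this k

end Aux

/-- In an inverse system of nonempty compact Hausdorff spaces with surjective continuous
bonding maps, if `U n ⊆ X n` are dense open sets with `f n '' U (n+1) ⊆ U n`, then the
intersection of the preimages of the `U n` under the canonical projections is dense in
the inverse limit. -/
theorem iInter_preimage_dense_in_inverse_limit
    {X : ℕ → Type*} [∀ n, TopologicalSpace (X n)]
    [∀ n, CompactSpace (X n)] [∀ n, T2Space (X n)] [∀ n, Nonempty (X n)]
    (f : ∀ n, X (n + 1) → X n)
    (hf_cont : ∀ n, Continuous (f n))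
    (hf_surj : ∀ n, Function.Surjective (f n))
    (U : ∀ n, Set (X n))
    (hU_open : ∀ n, IsOpen (U n))
    (hU_dense : ∀ n, Dense (U n))
    (hU_map : ∀ n, (f n) '' U (n + 1) ⊆ U n) :
    Dense (⋂ n, {x : {x : ∀ m, X m // ∀ m, f m (x (m + 1)) = x m} | x.1 n ∈ U n}) := by
  have hclosed : IsClosed {x : ∀ m, X m | ∀ m, f m (x (m + 1)) = x m} := by
    have heq : {x : ∀ m, X m | ∀ m, f m (x (m + 1)) = x m}
        = ⋂ m, {x : ∀ m, X m | f m (x (m + 1)) = x m} := by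
      ext x; simp
    rw [heq]
    exact isClosed_iInter fun m =>
      isClosed_eq ((hf_cont m).comp (continuous_apply _)) (continuous_apply _)
  haveI : CompactSpace {x : ∀ m, X m // ∀ m, f m (x (m + 1)) = x m} :=
    isCompact_iff_compactSpace.mp hclosed.isCompact
  apply dense_iInter_of_isOpen
  · intro n
    exact (hU_open n).preimage ((continuous_apply n).comp continuous_subtype_val)
  · intro n
    rw [dense_iff_inter_open]
    intro W hW hWne
    obtain ⟨z, hz⟩ := hWne
    obtain ⟨W', hW', rfl⟩ := isOpen_induced_iff.mp hW
    obtain ⟨I, u, hu, hsub⟩ := (isOpen_pi_iff.mp hW') z.1 hz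
    set m := max n (I.sup id) with hm
    have him : ∀ i ∈ I, i ≤ m := fun i hi =>
      le_trans (Finset.le_sup (f := id) hi) (le_max_right _ _)
    have hnm : n ≤ m := le_max_left _ _
    have hSopen : IsOpen {x : X m | ∀ i ∈ I, invSysDown f m x i ∈ u i} := by
      have heq : {x : X m | ∀ i ∈ I, invSysDown f m x i ∈ u i}
          = ⋂ i ∈ I, (fun x : X m => invSysDown f m x i) ⁻¹' u i := by
        ext x; simp
      rw [heq]
      exact isOpen_biInter_finset fun i hi =>
        (hu i hi).1.preimage (invSysDown_continuous f hf_cont m i)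
    have hzS : z.1 m ∈ {x : X m | ∀ i ∈ I, invSysDown f m x i ∈ u i} := by
      intro i hi
      rw [invSysDown_thread f z.1 z.2 i m (him i hi)]
      exact (hu i hi).2
    obtain ⟨x, hxS, hxU⟩ := (hU_dense m).inter_open_nonempty _ hSopen ⟨z.1 m, hzS⟩
    have hthread : ∀ i, i ≤ m → invSysThread f hf_surj m x i = invSysDown f m x i := by
      intro i hi
      conv_rhs => rw [← invSysThread_self f hf_surj m x]
      exact (invSysDown_thread f _ (invSysThread_compat f hf_surj m x) i m hi).symm
    refine ⟨⟨invSysThread f hf_surj m x, invSysThread_compat f hf_surj m x⟩, ?_, ?_⟩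
    · show invSysThread f hf_surj m x ∈ W'
      apply hsub
      intro i hi
      show invSysThread f hf_surj m x i ∈ u i
      rw [hthread i (him i hi)]
      exact hxS i hi
    · show invSysThread f hf_surj m x n ∈ U n
      rw [hthread n hnm]
      exact invSysDown_mem f U hU_map n m hnm x hxU
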